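/- arXiv:1808.00604 — 3 statements merged into one kernel-verified Lean document; each statement's English description precedes it below -/
import Mathlib

section
/- Up to isomorphism, the irreducible quaternionic representations of C_n are exactly Ψ_0, Ψ_1, ..., Ψ_{⌊n/2⌋}, and these are pairwise non-isomorphic. -/
open scoped Quaternion

/-- `ζ_n = e^{2πi/n}`. -/
noncomputable def zeta (n : ℕ) : ℂ := Complex.exp (2 * Real.pi * Complex.I / n)

/-- The standard embedding of `ℂ` into the quaternions `ℍ`. -/
noncomputable def cq : ℂ →+* ℍ[ℝ] where
  toFun z := ⟨z.re, z.im, 0, 0⟩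
  map_one' := by ext <;> simp
  map_mul' z w := by
    change (⟨(z * w).re, (z * w).im, 0, 0⟩ : ℍ[ℝ]) =
      (⟨z.re, z.im, 0, 0⟩ : ℍ[ℝ]) * (⟨w.re, w.im, 0, 0⟩ : ℍ[ℝ])
    ext <;> simp [Quaternion.ext_iff, Complex.mul_re, Complex.mul_im] <;> ring
  map_zero' := by ext <;> simp
  map_add' z w := by
    change (⟨(z + w).re, (z + w).im, 0, 0⟩ : ℍ[ℝ]) =
      (⟨z.re, z.im, 0, 0⟩ : ℍ[ℝ]) + (⟨w.re, w.im, 0, 0⟩ : ℍ[ℝ])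
    ext <;> simp

noncomputable def jq : ℍ[ℝ] := ⟨0, 0, 1, 0⟩

lemma cq_re (z : ℂ) : (cq z).re = z.re := rfl
lemma cq_imI (z : ℂ) : (cq z).imI = z.im := rfl
lemma cq_imJ (z : ℂ) : (cq z).imJ = 0 := rfl
lemma cq_imK (z : ℂ) : (cq z).imK = 0 := rfl

lemma jq_ne_zero : jq ≠ 0 := by
  intro h
  have := congrArg QuaternionAlgebra.imJ h
  simp [jq] at this

lemma re_mul_comm (a b : ℍ[ℝ]) : (a * b).re = (b * a).re := by
  simp [Quaternion.re_mul]; ring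

lemma cq_mul_jq (z : ℂ) : cq z * jq = jq * cq (starRingEnd ℂ z) := by
  apply Quaternion.ext <;>
    simp [cq_re, cq_imI, cq_imJ, cq_imK, Quaternion.re_mul, Quaternion.imI_mul,
      Quaternion.imJ_mul, Quaternion.imK_mul] <;> simp [jq]

lemma zeta_prim (n : ℕ) (hn : 0 < n) : IsPrimitiveRoot (zeta n) n :=
  Complex.isPrimitiveRoot_exp n hn.ne'

lemma zeta_pow_re (n : ℕ) (r : ℕ) :
    (zeta n ^ r).re = Real.cos (2 * Real.pi * r / n) := by
  have : zeta n ^ r = Complex.exp (((2 * Real.pi * r / n : ℝ) : ℂ) * Complex.I) := by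
    rw [zeta, ← Complex.exp_nat_mul]
    congr 1
    push_cast
    ring
  rw [this, Complex.exp_ofReal_mul_I_re]

lemma r_eq_of_cos_eq (n r₁ r₂ : ℕ) (hn : 0 < n) (h₁ : r₁ ≤ n / 2) (h₂ : r₂ ≤ n / 2)
    (h : Real.cos (2 * Real.pi * r₁ / n) = Real.cos (2 * Real.pi * r₂ / n)) : r₁ = r₂ := by
  have hπ := Real.pi_pos
  have hn' : (0 : ℝ) < n := by exact_mod_cast hn
  have mem : ∀ r : ℕ, r ≤ n / 2 → 2 * Real.pi * r / n ∈ Set.Icc 0 Real.pi := by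
    intro r hr
    have hr2 : 2 * r ≤ n := by omega
    have h2r : (2 * r : ℝ) ≤ n := by exact_mod_cast hr2
    constructor
    · positivity
    · rw [div_le_iff₀ hn']
      nlinarith
  have heq := Real.injOn_cos (mem r₁ h₁) (mem r₂ h₂) h
  have : (r₁ : ℝ) = r₂ := by
    have hne : (n : ℝ) ≠ 0 := ne_of_gt hn'
    have h2 := congrArg (· * (n : ℝ)) heq
    simp only [div_mul_cancel₀ _ hne] at h2
    exact mul_left_cancel₀ (by positivity : (2 : ℝ) * Real.pi ≠ 0) h2
  exact_mod_cast this

lemma unique_r (n : ℕ) (hn : 0 < n) {r₁ r₂ : ℕ} (h₁ : r₁ ≤ n / 2) (h₂ : r₂ ≤ n / 2)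
    (u : ℍ[ℝ]) (hu : u ≠ 0)
    (h : cq (zeta n ^ r₁) * u = u * cq (zeta n ^ r₂)) : r₁ = r₂ := by
  have key : (cq (zeta n ^ r₁)).re = (cq (zeta n ^ r₂)).re := by
    calc (cq (zeta n ^ r₁)).re = (cq (zeta n ^ r₁) * (u * u⁻¹)).re := by
          rw [mul_inv_cancel₀ hu, mul_one]
      _ = (cq (zeta n ^ r₁) * u * u⁻¹).re := by rw [mul_assoc]
      _ = (u * cq (zeta n ^ r₂) * u⁻¹).re := by rw [h]
      _ = (u⁻¹ * (u * cq (zeta n ^ r₂))).re := re_mul_comm _ _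
      _ = (cq (zeta n ^ r₂)).re := by rw [← mul_assoc, inv_mul_cancel₀ hu, one_mul]
  rw [cq_re, cq_re, zeta_pow_re, zeta_pow_re] at key
  exact r_eq_of_cos_eq n r₁ r₂ hn h₁ h₂ key

lemma zeta_conj (n k : ℕ) (hn : 0 < n) (hk : k ≤ n) :
    starRingEnd ℂ (zeta n ^ k) = zeta n ^ (n - k) := by
  have h1 : zeta n ^ n = 1 := (zeta_prim n hn).pow_eq_one
  have habs : ‖zeta n ^ k‖ = 1 := by
    have : ‖zeta n‖ = 1 := by
      rw [zeta]
      rw [Complex.norm_exp]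
      have : (2 * Real.pi * Complex.I / n).re = 0 := by
        simp [Complex.div_re]
      rw [this, Real.exp_zero]
    simp [map_pow, this]
  have hinv : (zeta n ^ k)⁻¹ = starRingEnd ℂ (zeta n ^ k) := Complex.inv_eq_conj habs
  rw [← hinv]
  refine inv_eq_of_mul_eq_one_left ?_
  rw [← pow_add]
  rwa [Nat.sub_add_cancel hk]

-- eigenvector lemma
open Polynomial in
lemma exists_eigen (n : ℕ) (hn : 0 < n) (M : Type) [AddCommGroup M] [Module ℍ[ℝ] M]
    (T : M →ₗ[ℍ[ℝ]] M) (hTn : T ^ n = 1) (m : M) (hm : m ≠ 0) :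
    ∃ k < n, ∃ w : M, w ≠ 0 ∧ T w = cq (zeta n ^ k) • w := by
  letI : Module ℂ M := Module.compHom M (cq : ℂ →+* ℍ[ℝ])
  have hsmul : ∀ (z : ℂ) (x : M), z • x = cq z • x := fun _ _ => rfl
  let S : M →ₗ[ℂ] M :=
    { toFun := T
      map_add' := T.map_add
      map_smul' := fun z x => T.map_smul (cq z) x }
  have hS : ∀ x : M, S x = T x := fun _ => rfl
  have hSn : ∀ x : M, (S ^ n) x = x := by
    intro x
    have h1 : ∀ j (x : M), (S ^ j) x = (T ^ j) x := by
      intro j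
      induction j with
      | zero => intro x; simp
      | succ j ih =>
        intro x
        rw [pow_succ, pow_succ, Module.End.mul_apply, Module.End.mul_apply, ih, hS]
    rw [h1, hTn]
    rfl
  let P : ℕ → ℂ[X] := fun j => ∏ i ∈ Finset.range j, (X - C (zeta n ^ i))
  let v : ℕ → M := fun j => Polynomial.aeval S (P j) m
  have hv0 : v 0 = m := by simp [v, P]
  have hvn : v n = 0 := by
    have hprod : (X ^ n - C (1:ℂ)) = ∏ i ∈ Finset.range n, (X - C (zeta n ^ i)) := by
      have := X_pow_sub_C_eq_prod (zeta_prim n hn) hn (one_pow n)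
      simpa using this
    have : P n = X ^ n - C (1:ℂ) := hprod.symm
    simp only [v, this, map_sub, map_pow, aeval_X, aeval_C, LinearMap.sub_apply]
    rw [hSn]
    simp
  have hstep : ∀ j, v (j + 1) = T (v j) - cq (zeta n ^ j) • v j := by
    intro j
    have hP : P (j + 1) = (X - C (zeta n ^ j)) * P j := Finset.prod_range_succ_comm _ j
    simp only [v, hP, map_mul, Module.End.mul_apply, map_sub, aeval_X, aeval_C,
      LinearMap.sub_apply, hS]
    rw [Module.algebraMap_end_apply, hsmul]
  classical
  have hex : ∃ j, v j = 0 := ⟨n, hvn⟩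
  let j := Nat.find hex
  have hj0 : j ≠ 0 := by
    intro h
    have := Nat.find_spec hex
    rw [show Nat.find hex = j from rfl, h, hv0] at this
    exact hm this
  have hjn : j ≤ n := Nat.find_min' hex hvn
  obtain ⟨k, hk⟩ : ∃ k, j = k + 1 := ⟨j - 1, by omega⟩
  have hvk : v k ≠ 0 := Nat.find_min hex (by omega)
  have hvk1 : v (k + 1) = 0 := by rw [← hk]; exact Nat.find_spec hex
  refine ⟨k, by omega, v k, hvk, ?_⟩
  have := hstep k
  rw [hvk1] at this
  exact (sub_eq_zero.mp this.symm)

/-- right multiplication by a nonzero quaternion as an `ℍ`-linear equivalence. -/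
noncomputable def rmul (u : ℍ[ℝ]) (hu : u ≠ 0) : ℍ[ℝ] ≃ₗ[ℍ[ℝ]] ℍ[ℝ] where
  toFun x := x * u
  invFun x := x * u⁻¹
  map_add' a b := add_mul a b u
  map_smul' q x := by simp [smul_eq_mul, mul_assoc]
  left_inv x := by simp [mul_assoc, mul_inv_cancel₀ hu]
  right_inv x := by simp [mul_assoc, inv_mul_cancel₀ hu]

lemma exists_rep (n : ℕ) (hn : 0 < n) (M : Type) [AddCommGroup M] [Module ℍ[ℝ] M]
    (T : M →ₗ[ℍ[ℝ]] M) (hTn : T ^ n = 1) (hMnt : Nontrivial M)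
    (hirr : ∀ p : Submodule ℍ[ℝ] M, (∀ x ∈ p, T x ∈ p) → p = ⊥ ∨ p = ⊤) :
    ∃ k < n, ∃ f : M ≃ₗ[ℍ[ℝ]] ℍ[ℝ], ∀ x : M, f (T x) = f x * cq (zeta n ^ k) := by
  obtain ⟨m, hm⟩ := exists_ne (0 : M)
  obtain ⟨k, hkn, w, hw, heig⟩ := exists_eigen n hn M T hTn m hm
  -- the span of w is T-invariant
  have hspan : Submodule.span ℍ[ℝ] {w} = ⊤ := by
    have hinv : ∀ x ∈ Submodule.span ℍ[ℝ] {w}, T x ∈ Submodule.span ℍ[ℝ] {w} := by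
      intro x hx
      obtain ⟨q, rfl⟩ := Submodule.mem_span_singleton.mp hx
      rw [map_smul, heig, smul_smul]
      exact Submodule.smul_mem _ _ (Submodule.mem_span_singleton_self w)
    rcases hirr (Submodule.span ℍ[ℝ] {w}) hinv with h | h
    · exact absurd (h ▸ Submodule.mem_span_singleton_self w) (by simpa using hw)
    · exact h
  -- q ↦ q • w is an equivalence ℍ ≃ M
  let L : ℍ[ℝ] →ₗ[ℍ[ℝ]] M := LinearMap.toSpanSingleton ℍ[ℝ] M w
  have hLbij : Function.Bijective L := by
    constructor
    · intro a b hab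
      by_contra hne
      have h0 : (a - b) • w = 0 := by
        simpa [L, LinearMap.toSpanSingleton_apply, sub_smul] using sub_eq_zero.mpr hab
      have : w = 0 := by
        have := congrArg (fun x => (a - b)⁻¹ • x) h0
        simpa [smul_smul, inv_mul_cancel₀ (sub_ne_zero.mpr hne)] using this
      exact hw this
    · intro x
      have : x ∈ Submodule.span ℍ[ℝ] {w} := hspan ▸ Submodule.mem_top
      obtain ⟨q, hq⟩ := Submodule.mem_span_singleton.mp this
      exact ⟨q, hq⟩
  let e : ℍ[ℝ] ≃ₗ[ℍ[ℝ]] M := LinearEquiv.ofBijective L hLbij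
  refine ⟨k, hkn, e.symm, ?_⟩
  intro x
  have hx : x = e (e.symm x) := (e.apply_symm_apply x).symm
  have he : ∀ q : ℍ[ℝ], e q = q • w := fun q => rfl
  have hTx : T x = e (e.symm x * cq (zeta n ^ k)) := by
    conv_lhs => rw [hx]
    rw [he, map_smul, heig, smul_smul, he]
  rw [hTx, e.symm_apply_apply]

/-- Up to isomorphism, the irreducible quaternionic representations of `C_n`
are exactly `Ψ_0, Ψ_1, ..., Ψ_{⌊n/2⌋}`, and these are pairwise non-isomorphic.
A quaternionic `C_n`-representation is a left `ℍ`-module `M` together with the `ℍ`-linear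
action `T` of the standard generator, satisfying `T ^ n = 1`; `Ψ_r` is `ℍ` with the generator
acting by right multiplication by `ζ_n^r`.  The first conjunct says each `Ψ_r` with
`r ≤ ⌊n/2⌋` is irreducible; the second says every irreducible quaternionic
`C_n`-representation is isomorphic to `Ψ_r` for a *unique* `r ≤ ⌊n/2⌋` (uniqueness encodes
pairwise non-isomorphism). -/
theorem irreducible_quaternionic_rep_classification (n : ℕ) (hn : 0 < n) :
    (∀ r : ℕ, r ≤ n / 2 → ∀ p : Submodule ℍ[ℝ] ℍ[ℝ],
        (∀ x ∈ p, x * cq (zeta n ^ (r : ℤ)) ∈ p) → p = ⊥ ∨ p = ⊤)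
    ∧ (∀ (M : Type) [AddCommGroup M] [Module ℍ[ℝ] M] (T : M →ₗ[ℍ[ℝ]] M),
        T ^ n = 1 → Nontrivial M →
        (∀ p : Submodule ℍ[ℝ] M, (∀ x ∈ p, T x ∈ p) → p = ⊥ ∨ p = ⊤) →
        ∃! r : ℕ, r ≤ n / 2 ∧
          ∃ f : M ≃ₗ[ℍ[ℝ]] ℍ[ℝ], ∀ x : M, f (T x) = f x * cq (zeta n ^ (r : ℤ))) := by

  constructor
  · intro r _ p _
    by_cases hp : p = ⊥
    · exact Or.inl hp
    · right
      obtain ⟨x, hxp, hx0⟩ := (Submodule.ne_bot_iff p).mp hp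
      rw [Submodule.eq_top_iff']
      intro y
      have hy : y = (y * x⁻¹) • x := by
        simp [smul_eq_mul, mul_assoc, inv_mul_cancel₀ hx0]
      rw [hy]
      exact Submodule.smul_mem _ _ hxp
  · intro M _ _ T hTn hnt hirr
    obtain ⟨k, hkn, f, hf⟩ := exists_rep n hn M T hTn hnt hirr
    have main : ∃ r ≤ n / 2, ∃ g : M ≃ₗ[ℍ[ℝ]] ℍ[ℝ],
        ∀ x : M, g (T x) = g x * cq (zeta n ^ r) := by
      by_cases hk : k ≤ n / 2
      · exact ⟨k, hk, f, hf⟩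
      · refine ⟨n - k, by omega, f.trans (rmul jq jq_ne_zero), ?_⟩
        intro x
        have hft : ∀ y : M, (f.trans (rmul jq jq_ne_zero)) y = f y * jq := fun _ => rfl
        rw [hft, hft, hf, mul_assoc, cq_mul_jq, zeta_conj n k hn (le_of_lt hkn), ← mul_assoc]
    obtain ⟨r, hr, g, hg⟩ := main
    refine ⟨r, ⟨hr, g, ?_⟩, ?_⟩
    · intro x
      rw [zpow_natCast]
      exact hg x
    · rintro r' ⟨hr', f', hf'⟩
      simp only [zpow_natCast] at hf'
      set u := f' (g.symm 1) with hu_def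
      have hu : u ≠ 0 := by
        intro h
        have h1 : g.symm 1 = 0 := by
          have := f'.map_eq_zero_iff.mp h
          exact this
        have : (1 : ℍ[ℝ]) = 0 := by
          have := congrArg g h1
          simpa using this
        exact one_ne_zero this
      have hrel : ∀ y : ℍ[ℝ], f' (g.symm y) = y * u := by
        intro y
        calc f' (g.symm y) = f' (g.symm (y • (1 : ℍ[ℝ]))) := by
              rw [smul_eq_mul, mul_one]
          _ = y • f' (g.symm 1) := by rw [map_smul, map_smul]
          _ = y * u := by rw [smul_eq_mul]
      have hcomm : cq (zeta n ^ r) * u = u * cq (zeta n ^ r') := by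
        have hx1 : g (T (g.symm 1)) = cq (zeta n ^ r) := by
          rw [hg, g.apply_symm_apply, one_mul]
        have hTx : T (g.symm 1) = g.symm (cq (zeta n ^ r)) := by
          rw [← hx1, g.symm_apply_apply]
        have h1 : f' (T (g.symm 1)) = cq (zeta n ^ r) * u := by
          rw [hTx, hrel]
        have h2 : f' (T (g.symm 1)) = u * cq (zeta n ^ r') := by
          rw [hf', ← hu_def]
        rw [← h1, h2]
      exact (unique_r n hn hr hr' u hu hcomm).symm
end

section
/- Let W_k = ⊕_{i=0}^{k−1} Ψ_i be the direct sum of the quaternionic C_n-representations Ψ_0, ..., Ψ_{k−1}. Then the real dimension of the Φ_k-isotypical component of the underlying complex representation of W_k is 4·⌊k/n⌋ + 2·⌊2(k − ⌊k/n⌋·n)/(n+1)⌋, and this quantity is non-decreasing in k. -/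
lemma zeta_zpow_eq_iff (n : ℕ) (hn : 0 < n) (a b : ℤ) :
    zeta n ^ a = zeta n ^ b ↔ (n : ℤ) ∣ a - b := by
  have h : IsPrimitiveRoot (zeta n) n := Complex.isPrimitiveRoot_exp n hn.ne'
  have hne : zeta n ≠ 0 := h.ne_zero hn.ne'
  rw [← h.zpow_eq_one_iff_dvd, zpow_sub₀ hne, div_eq_one_iff_eq (zpow_ne_zero _ hne)]

lemma succ_mod_div (n k : ℕ) (hn : 0 < n) :
    ((k+1) % n = 0 ∧ k % n = n - 1 ∧ (k+1)/n = k/n + 1) ∨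
    ((k+1) % n = k % n + 1 ∧ k % n + 1 < n ∧ (k+1)/n = k/n) := by
  rcases Nat.lt_or_ge 1 n with h1 | h1
  swap
  · left
    have hn1 : n = 1 := by omega
    simp [hn1, Nat.mod_one, Nat.div_one]
  have hone : 1 % n = 1 := Nat.mod_eq_of_lt h1
  have hmod : (k+1) % n = (k % n + 1) % n := by
    conv_lhs => rw [Nat.add_mod, hone]
  have hs : k % n < n := Nat.mod_lt _ hn
  by_cases hsn : k % n + 1 = n
  · left
    have h0 : (k+1) % n = 0 := by rw [hmod, hsn, Nat.mod_self]
    have hd : n ∣ k + 1 := Nat.dvd_of_mod_eq_zero h0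
    exact ⟨h0, by omega, Nat.succ_div_of_dvd hd⟩
  · right
    have h0 : (k+1) % n = k % n + 1 := by rw [hmod, Nat.mod_eq_of_lt (by omega)]
    have hd : ¬ n ∣ k + 1 := by
      intro hd
      have h2 : (k+1) % n = 0 := Nat.mod_eq_zero_of_dvd hd
      omega
    exact ⟨h0, by omega, Nat.succ_div_of_not_dvd hd⟩

lemma card_residues (n : ℕ) (hn : 0 < n) (r : ℕ) (hr : r < n) (k : ℕ) :
    ((Finset.range k).filter (fun i => i % n = r)).card
      = k / n + if r < k % n then 1 else 0 := by
  induction k with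
  | zero => simp
  | succ k ih =>
    rw [Finset.range_add_one, Finset.filter_insert]
    have hins : k ∉ (Finset.range k).filter (fun i => i % n = r) := by simp
    rcases succ_mod_div n k hn with ⟨h1, h2, h3⟩ | ⟨h1, h2, h3⟩ <;>
        by_cases hk : k % n = r
    · rw [if_pos hk, Finset.card_insert_of_notMem hins, ih]
      have hs : k % n < n := Nat.mod_lt _ hn
      split_ifs <;> omega
    · rw [if_neg hk, ih]
      have hs : k % n < n := Nat.mod_lt _ hn
      split_ifs <;> omega
    · rw [if_pos hk, Finset.card_insert_of_notMem hins, ih]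
      split_ifs <;> omega
    · rw [if_neg hk, ih]
      split_ifs <;> omega

lemma dvd_add_iff_mod (n : ℕ) (hn : 0 < n) (i k : ℕ) :
    n ∣ (i + k) ↔ i % n = (n - k % n) % n := by
  rw [Nat.dvd_iff_mod_eq_zero, Nat.add_mod]
  have ha : i % n < n := Nat.mod_lt _ hn
  have hb : k % n < n := Nat.mod_lt _ hn
  rcases Nat.lt_or_ge (i % n + k % n) n with h | h
  · rw [Nat.mod_eq_of_lt h]
    by_cases hbz : k % n = 0
    · rw [hbz, Nat.sub_zero, Nat.mod_self]; omega
    · rw [Nat.mod_eq_of_lt (by omega : n - k % n < n)]; omega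
  · rw [Nat.mod_eq_sub_mod h, Nat.mod_eq_of_lt (by omega)]
    by_cases hbz : k % n = 0
    · omega
    · rw [Nat.mod_eq_of_lt (by omega : n - k % n < n)]; omega

lemma sub_div_mul (n k : ℕ) (hn : 0 < n) : k - k / n * n = k % n := by
  have h := Nat.div_add_mod k n
  rw [Nat.mul_comm] at h
  exact Nat.sub_eq_of_eq_add (by rw [Nat.add_comm] at h; exact h.symm)

lemma two_mul_mod_div (n r : ℕ) (hn : 0 < n) (hr : r < n) :
    2 * r / (n + 1) = if n + 1 ≤ 2 * r then 1 else 0 := by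
  split_ifs with h
  · exact Nat.div_eq_of_lt_le (by omega) (by omega)
  · exact Nat.div_eq_of_lt (by omega)

lemma arith_eq (n : ℕ) (hn : 0 < n) (k : ℕ) :
    2 * ((k / n + if k % n < k % n then 1 else 0)
        + (k / n + if (n - k % n) % n < k % n then 1 else 0))
      = 4 * (k / n) + 2 * (2 * (k - k / n * n) / (n + 1)) := by
  rw [sub_div_mul n k hn, two_mul_mod_div n _ hn (Nat.mod_lt _ hn)]
  have hb : k % n < n := Nat.mod_lt _ hn
  rw [if_neg (lt_irrefl _)]
  by_cases hbz : k % n = 0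
  · rw [hbz]; simp [Nat.mod_self]; omega
  · rw [Nat.mod_eq_of_lt (by omega : n - k % n < n)]
    split_ifs <;> omega

lemma mono_step (n : ℕ) (hn : 0 < n) (m : ℕ) :
    4 * (m / n) + 2 * (2 * (m - m / n * n) / (n + 1))
      ≤ 4 * ((m + 1) / n) + 2 * (2 * ((m + 1) - (m + 1) / n * n) / (n + 1)) := by
  rw [sub_div_mul n m hn, sub_div_mul n (m+1) hn]
  rcases succ_mod_div n m hn with ⟨h1, h2, h3⟩ | ⟨h1, h2, h3⟩
  · rw [h1, h3]
    have hle : 2 * (m % n) / (n + 1) ≤ 2 := by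
      calc 2 * (m % n) / (n+1) ≤ 2 * (n+1) / (n+1) :=
            Nat.div_le_div_right (by have := Nat.mod_lt m hn; omega)
        _ = 2 := by simp
    omega
  · rw [h1, h3]
    have hle : 2 * (m % n) / (n + 1) ≤ 2 * (m % n + 1) / (n + 1) :=
      Nat.div_le_div_right (by omega)
    omega


/-- Let `W_k = ⊕_{i=0}^{k−1} Ψ_i`.  Its underlying complex representation
is `⊕_{i=0}^{k−1} (Φ_i ⊕ Φ_{−i})`, modeled on `Fin k → ℂ × ℂ` with the generator `T` acting
on the `i`-th coordinate by `(ζ_n^i, ζ_n^{−i})`.  Then the real dimension of the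
`Φ_k`-isotypical component (the `ζ_n^k`-eigenspace of `T`) of `W_k` is
`4·⌊k/n⌋ + 2·⌊2(k − ⌊k/n⌋·n)/(n+1)⌋`, and this quantity is non-decreasing in `k`. -/
theorem dim_isotypical_of_flag (n : ℕ) (hn : 0 < n) (k : ℕ)
    (T : (Fin k → ℂ × ℂ) →ₗ[ℂ] (Fin k → ℂ × ℂ))
    (hT : ∀ (f : Fin k → ℂ × ℂ) (i : Fin k),
      T f i = (zeta n ^ (i : ℤ) * (f i).1, zeta n ^ (-(i : ℤ)) * (f i).2)) :
    Module.finrank ℝ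
        ((Module.End.eigenspace T (zeta n ^ (k : ℤ))).restrictScalars ℝ)
      = 4 * (k / n) + 2 * (2 * (k - k / n * n) / (n + 1))
    ∧ ∀ m : ℕ, 4 * (m / n) + 2 * (2 * (m - m / n * n) / (n + 1))
        ≤ 4 * ((m + 1) / n) + 2 * (2 * ((m + 1) - (m + 1) / n * n) / (n + 1)) := by
  classical
  refine ⟨?_, fun m => mono_step n hn m⟩
  set μ : ℂ := zeta n ^ (k : ℤ) with hμ
  set S : Fin k → Submodule ℂ (ℂ × ℂ) :=
    fun i => ((if zeta n ^ (i : ℤ) = μ then (⊤ : Submodule ℂ ℂ) else ⊥).prod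
              (if zeta n ^ (-(i : ℤ)) = μ then (⊤ : Submodule ℂ ℂ) else ⊥)) with hS
  have hmem_ite : ∀ (c : Prop) [Decidable c] (x : ℂ),
      (x ∈ (if c then (⊤ : Submodule ℂ ℂ) else ⊥)) ↔ (c ∨ x = 0) := by
    intro c _ x; split_ifs with h <;> simp [h]
  have hEig : Module.End.eigenspace T μ = Submodule.pi Set.univ S := by
    ext f
    rw [Module.End.mem_eigenspace_iff, Submodule.mem_pi, funext_iff]
    refine forall_congr' fun i => ?_
    simp only [Set.mem_univ, true_implies, hS]
    rw [hT, Submodule.mem_prod, hmem_ite, hmem_ite, Prod.ext_iff]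
    simp only [Pi.smul_apply, Prod.smul_fst, Prod.smul_snd, smul_eq_mul]
    rw [mul_eq_mul_right_iff, mul_eq_mul_right_iff]
  have ePi : (Submodule.pi Set.univ S) ≃ₗ[ℂ] ((i : Fin k) → S i) :=
    { toFun := fun f i => ⟨f.1 i, f.2 i (Set.mem_univ i)⟩,
      map_add' := fun f g => rfl,
      map_smul' := fun c f => rfl,
      invFun := fun g => ⟨fun i => g i, fun i _ => (g i).2⟩,
      left_inv := fun f => rfl,
      right_inv := fun g => rfl }
  have eProd : ∀ (p q : Submodule ℂ ℂ),
      Module.finrank ℂ (p.prod q) = Module.finrank ℂ p + Module.finrank ℂ q := by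
    intro p q
    have e : (p.prod q) ≃ₗ[ℂ] (p × q) :=
      { toFun := fun x => (⟨x.1.1, x.2.1⟩, ⟨x.1.2, x.2.2⟩),
        map_add' := fun x y => rfl,
        map_smul' := fun c x => rfl,
        invFun := fun x => ⟨(x.1.1, x.2.1), ⟨x.1.2, x.2.2⟩⟩,
        left_inv := fun x => rfl,
        right_inv := fun x => rfl }
    rw [e.finrank_eq, Module.finrank_prod]
  have hite : ∀ (c : Prop) [Decidable c],
      Module.finrank ℂ ↥(if c then (⊤ : Submodule ℂ ℂ) else ⊥) = if c then 1 else 0 := by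
    intro c _
    by_cases h : c
    · rw [if_pos h, if_pos h, finrank_top]; exact Module.finrank_self ℂ
    · rw [if_neg h, if_neg h]; exact finrank_bot ℂ ℂ
  have hcond1 : ∀ i : Fin k, (zeta n ^ (i : ℤ) = μ) ↔ ((i : ℕ) % n = k % n) := by
    intro i
    rw [hμ, zeta_zpow_eq_iff n hn, ← Nat.modEq_iff_dvd]
    exact ⟨fun h => h.symm, fun h => h.symm⟩
  have hcond2 : ∀ i : Fin k,
      (zeta n ^ (-(i : ℤ)) = μ) ↔ ((i : ℕ) % n = (n - k % n) % n) := by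
    intro i
    rw [hμ, zeta_zpow_eq_iff n hn]
    have h : (-(i : ℤ)) - (k : ℤ) = -((((i : ℕ) + k : ℕ)) : ℤ) := by push_cast; ring
    rw [h, dvd_neg, Int.natCast_dvd_natCast]
    exact dvd_add_iff_mod n hn i k
  -- complex dimension
  have hdimC : Module.finrank ℂ (Module.End.eigenspace T μ)
      = (k / n + if k % n < k % n then 1 else 0)
        + (k / n + if (n - k % n) % n < k % n then 1 else 0) := by
    rw [hEig, ePi.finrank_eq, Module.finrank_pi_fintype]
    have : ∀ i : Fin k, Module.finrank ℂ (S i)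
        = (if (i : ℕ) % n = k % n then 1 else 0)
          + (if (i : ℕ) % n = (n - k % n) % n then 1 else 0) := by
      intro i
      rw [hS]
      rw [eProd, hite, hite]
      rw [if_congr (hcond1 i) rfl rfl, if_congr (hcond2 i) rfl rfl]
    rw [Finset.sum_congr rfl (fun i _ => this i), Finset.sum_add_distrib]
    rw [Fin.sum_univ_eq_sum_range (fun i => if i % n = k % n then 1 else 0),
        Fin.sum_univ_eq_sum_range (fun i => if i % n = (n - k % n) % n then 1 else 0),
        ← Finset.card_filter, ← Finset.card_filter,
        card_residues n hn _ (Nat.mod_lt _ hn) k,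
        card_residues n hn _ (Nat.mod_lt _ hn) k]
  -- real dimension
  have eRS : ((Module.End.eigenspace T μ).restrictScalars ℝ)
      ≃ₗ[ℝ] (Module.End.eigenspace T μ) :=
    (Submodule.restrictScalarsEquiv ℝ ℂ (Fin k → ℂ × ℂ) (Module.End.eigenspace T μ)).restrictScalars ℝ
  rw [eRS.finrank_eq, ← Module.finrank_mul_finrank ℝ ℂ (Module.End.eigenspace T μ),
      Complex.finrank_real_complex, hdimC, ← arith_eq n hn k]
end

section
/- Define real C_n-representations w_k = Φ_{−k} ⊗_ℂ (⊕_{i=0}^{k−1} Ψ_i) (restricted to real scalars). Then for every positive integer k and every divisor d of n, dim_ℝ(w_k^{dC_n}) ≤ dim_ℝ(w_{k+1}^{dC_n}), with strict inequality for the trivial subgroup; i.e., w_k ≪ w_{k+1}. -/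
lemma zeta_ne_zero (n : ℕ) : zeta n ≠ 0 := Complex.exp_ne_zero _

lemma zeta_pow_n (n : ℕ) (hn : 0 < n) : zeta n ^ (n : ℤ) = 1 := by
  have hn' : (n : ℂ) ≠ 0 := Nat.cast_ne_zero.mpr hn.ne'
  rw [zpow_natCast, zeta, ← Complex.exp_nat_mul,
    show (n : ℂ) * (2 * Real.pi * Complex.I / n) = 2 * Real.pi * Complex.I by field_simp]
  exact Complex.exp_two_pi_mul_I

/-- The action of `T ^ d` on a diagonal operator. -/
lemma diag_pow_apply {n k : ℕ}
    (T : (Fin k → ℂ × ℂ) →ₗ[ℂ] (Fin k → ℂ × ℂ))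
    (hT : ∀ (f : Fin k → ℂ × ℂ) (i : Fin k),
      T f i = (zeta n ^ ((i : ℤ) - (k : ℤ)) * (f i).1,
               zeta n ^ (-(i : ℤ) - (k : ℤ)) * (f i).2))
    (d : ℕ) (f : Fin k → ℂ × ℂ) (i : Fin k) :
    (T ^ d) f i = (zeta n ^ ((d : ℤ) * ((i : ℤ) - (k : ℤ))) * (f i).1,
                   zeta n ^ ((d : ℤ) * (-(i : ℤ) - (k : ℤ))) * (f i).2) := by
  induction d with
  | zero => simp
  | succ d ih =>
    have h1 : (T ^ (d + 1)) f = T ((T ^ d) f) := by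
      rw [pow_succ', Module.End.mul_apply]
    rw [h1, hT, ih]
    have hz := zeta_ne_zero n
    refine Prod.ext ?_ ?_ <;> simp only []
    · rw [← mul_assoc, ← zpow_add₀ hz]
      congr 1
      push_cast
      ring_nf
    · rw [← mul_assoc, ← zpow_add₀ hz]
      congr 1
      push_cast
      ring_nf

/-- The injection `w_k → w_{k+1}` shifting first components up and second components down. -/
noncomputable def phi (k : ℕ) : (Fin k → ℂ × ℂ) →ₗ[ℂ] (Fin (k + 1) → ℂ × ℂ) where
  toFun f j :=
    ((if h : 1 ≤ (j : ℕ) then (f ⟨(j : ℕ) - 1, by omega⟩).1 else 0),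
     (if h : (j : ℕ) + 1 < k then (f ⟨(j : ℕ) + 1, h⟩).2
      else if h2 : (j : ℕ) + 1 = k then (f ⟨0, by omega⟩).2 else 0))
  map_add' f g := by
    funext j
    simp only [Pi.add_apply, Prod.fst_add, Prod.snd_add, Prod.mk_add_mk]
    refine Prod.ext ?_ ?_ <;> simp only [] <;> split_ifs <;> simp
  map_smul' c f := by
    funext j
    simp only [Pi.smul_apply, Prod.smul_mk, RingHom.id_apply, smul_eq_mul, Prod.fst_mul,
      Prod.smul_fst, Prod.smul_snd]
    refine Prod.ext ?_ ?_ <;> simp only [] <;> split_ifs <;> simp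

lemma phi_injective (k : ℕ) (hk : 0 < k) : Function.Injective (phi k) := by
  intro f g h
  funext i
  have hi := i.isLt
  refine Prod.ext ?_ ?_
  · have h1 := congrArg (fun F => (F (⟨(i : ℕ) + 1, by omega⟩ : Fin (k + 1))).1) h
    simpa [phi] using h1
  · by_cases h0 : 1 ≤ (i : ℕ)
    · have h1 := congrArg (fun F => (F (⟨(i : ℕ) - 1, by omega⟩ : Fin (k + 1))).2) h
      have hc : (i : ℕ) - 1 + 1 < k := by omega
      simp only [phi, LinearMap.coe_mk, AddHom.coe_mk, hc, dif_pos] at h1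
      have he : (⟨(i : ℕ) - 1 + 1, hc⟩ : Fin k) = i := by
        apply Fin.ext; simp; omega
      rwa [he] at h1
    · have h1 := congrArg (fun F => (F (⟨k - 1, by omega⟩ : Fin (k + 1))).2) h
      have hc1 : ¬ (k - 1 + 1 < k) := by omega
      have hc2 : k - 1 + 1 = k := by omega
      simp only [phi, LinearMap.coe_mk, AddHom.coe_mk, hc1, hc2, dif_neg, dif_pos,
        not_false_iff] at h1
      have he : (⟨0, by omega⟩ : Fin k) = i := by
        apply Fin.ext; simp; omega
      rw [he] at h1
      simpa using h1

/-- Let `w_k = Φ_{−k} ⊗_ℂ (⊕_{i=0}^{k−1} Ψ_i)` (restricted to real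
scalars), modeled on `Fin k → ℂ × ℂ` with the generator `T` acting on the `i`-th coordinate
by `(ζ_n^{i−k}, ζ_n^{−i−k})`.  The fixed points of the subgroup `dC_n` form the kernel of
`T^d − 1`.  Then for every positive integer `k` and every divisor `d` of `n`,
`dim_ℝ(w_k^{dC_n}) ≤ dim_ℝ(w_{k+1}^{dC_n})`, with strict inequality for the trivial subgroup
(`d = n`); i.e., `w_k ≪ w_{k+1}`. -/
theorem w_k_ll_w_succ (n : ℕ) (hn : 0 < n) (k : ℕ) (hk : 0 < k) (d : ℕ) (hd : d ∣ n)
    (T : (Fin k → ℂ × ℂ) →ₗ[ℂ] (Fin k → ℂ × ℂ))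
    (T' : (Fin (k + 1) → ℂ × ℂ) →ₗ[ℂ] (Fin (k + 1) → ℂ × ℂ))
    (hT : ∀ (f : Fin k → ℂ × ℂ) (i : Fin k),
      T f i = (zeta n ^ ((i : ℤ) - (k : ℤ)) * (f i).1,
               zeta n ^ (-(i : ℤ) - (k : ℤ)) * (f i).2))
    (hT' : ∀ (f : Fin (k + 1) → ℂ × ℂ) (i : Fin (k + 1)),
      T' f i = (zeta n ^ ((i : ℤ) - (k + 1 : ℤ)) * (f i).1,
                zeta n ^ (-(i : ℤ) - (k + 1 : ℤ)) * (f i).2)) :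
    Module.finrank ℝ ((LinearMap.ker (T ^ d - LinearMap.id)).restrictScalars ℝ)
      ≤ Module.finrank ℝ ((LinearMap.ker (T' ^ d - LinearMap.id)).restrictScalars ℝ)
    ∧ (d = n →
      Module.finrank ℝ ((LinearMap.ker (T ^ d - LinearMap.id)).restrictScalars ℝ)
        < Module.finrank ℝ ((LinearMap.ker (T' ^ d - LinearMap.id)).restrictScalars ℝ)) := by
  have hz := zeta_ne_zero n
  -- characterization of the kernels
  have hker : ∀ f : Fin k → ℂ × ℂ, f ∈ LinearMap.ker (T ^ d - LinearMap.id) ↔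
      ∀ i : Fin k, zeta n ^ ((d : ℤ) * ((i : ℤ) - (k : ℤ))) * (f i).1 = (f i).1 ∧
        zeta n ^ ((d : ℤ) * (-(i : ℤ) - (k : ℤ))) * (f i).2 = (f i).2 := by
    intro f
    rw [LinearMap.mem_ker, LinearMap.sub_apply, LinearMap.id_apply, sub_eq_zero]
    constructor
    · intro h i
      have h1 := congrFun h i
      rw [diag_pow_apply T hT d f i] at h1
      exact ⟨congrArg Prod.fst h1, congrArg Prod.snd h1⟩
    · intro h
      funext i
      rw [diag_pow_apply T hT d f i]
      exact Prod.ext (h i).1 (h i).2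
  have hker' : ∀ f : Fin (k + 1) → ℂ × ℂ, f ∈ LinearMap.ker (T' ^ d - LinearMap.id) ↔
      ∀ i : Fin (k + 1), zeta n ^ ((d : ℤ) * ((i : ℤ) - (k + 1 : ℤ))) * (f i).1 = (f i).1 ∧
        zeta n ^ ((d : ℤ) * (-(i : ℤ) - (k + 1 : ℤ))) * (f i).2 = (f i).2 := by
    intro f
    rw [LinearMap.mem_ker, LinearMap.sub_apply, LinearMap.id_apply, sub_eq_zero]
    constructor
    · intro h i
      have h1 := congrFun h i
      rw [diag_pow_apply T' hT' d f i] at h1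
      exact ⟨congrArg Prod.fst h1, congrArg Prod.snd h1⟩
    · intro h
      funext i
      rw [diag_pow_apply T' hT' d f i]
      exact Prod.ext (h i).1 (h i).2
  -- phi maps kernel into kernel
  have hmap : ∀ f ∈ LinearMap.ker (T ^ d - LinearMap.id),
      phi k f ∈ LinearMap.ker (T' ^ d - LinearMap.id) := by
    intro f hf
    rw [hker] at hf
    rw [hker']
    intro j
    constructor
    · show zeta n ^ ((d : ℤ) * ((j : ℤ) - (k + 1 : ℤ))) * (phi k f j).1 = (phi k f j).1
      simp only [phi, LinearMap.coe_mk, AddHom.coe_mk]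
      split_ifs with h1
      · have := (hf ⟨(j : ℕ) - 1, by omega⟩).1
        have he : (d : ℤ) * ((j : ℤ) - ((k : ℤ) + 1)) =
            (d : ℤ) * (((((j : ℕ) - 1 : ℕ)) : ℤ) - (k : ℤ)) := by
          have : ((((j : ℕ) - 1 : ℕ) : ℤ) - (k : ℤ)) = (j : ℤ) - ((k : ℤ) + 1) := by omega
          rw [this]
        rw [he]
        exact this
      · exact mul_zero _
    · show zeta n ^ ((d : ℤ) * (-(j : ℤ) - (k + 1 : ℤ))) * (phi k f j).2 = (phi k f j).2
      simp only [phi, LinearMap.coe_mk, AddHom.coe_mk]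
      split_ifs with h1 h2
      · have := (hf ⟨(j : ℕ) + 1, h1⟩).2
        have he : (d : ℤ) * (-(j : ℤ) - ((k : ℤ) + 1)) =
            (d : ℤ) * (-((((j : ℕ) + 1 : ℕ)) : ℤ) - (k : ℤ)) := by
          have : (-(((j : ℕ) + 1 : ℕ) : ℤ) - (k : ℤ)) = -(j : ℤ) - ((k : ℤ) + 1) := by
            push_cast; ring
          rw [this]
        rw [he]
        exact this
      · -- j + 1 = k : exponent is twice that of index 0
        have h0 := (hf ⟨0, by omega⟩).2
        have he : (d : ℤ) * (-(j : ℤ) - (k + 1 : ℤ)) =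
            (d : ℤ) * (-((0 : ℕ) : ℤ) - (k : ℤ)) + (d : ℤ) * (-((0 : ℕ) : ℤ) - (k : ℤ)) := by
          have : (j : ℤ) = (k : ℤ) - 1 := by omega
          rw [this]; push_cast; ring
        rw [he, zpow_add₀ hz, mul_assoc]
        simp only [Nat.cast_zero] at h0 ⊢
        rw [h0, h0]
      · exact mul_zero _
  -- the real-linear injection between the kernels
  let ψ : ((LinearMap.ker (T ^ d - LinearMap.id)).restrictScalars ℝ) →ₗ[ℝ]
      ((LinearMap.ker (T' ^ d - LinearMap.id)).restrictScalars ℝ) :=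
    ((phi k).restrictScalars ℝ).restrict hmap
  have hψ : Function.Injective ψ := by
    intro x y hxy
    have := congrArg Subtype.val hxy
    exact Subtype.ext (phi_injective k hk this)
  refine ⟨LinearMap.finrank_le_finrank_of_injective hψ, ?_⟩
  -- strict inequality for d = n
  rintro rfl
  have h1 : ∀ e : ℤ, zeta d ^ ((d : ℤ) * e) = 1 := by
    intro e
    rw [zpow_mul, zeta_pow_n d hn, one_zpow]
  have hk1 : LinearMap.ker (T ^ d - LinearMap.id) = ⊤ := by
    rw [eq_top_iff]
    intro f _
    rw [hker]
    intro i
    rw [h1, h1, one_mul, one_mul]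
    exact ⟨rfl, rfl⟩
  have hk2 : LinearMap.ker (T' ^ d - LinearMap.id) = ⊤ := by
    rw [eq_top_iff]
    intro f _
    rw [hker']
    intro i
    rw [h1, h1, one_mul, one_mul]
    exact ⟨rfl, rfl⟩
  rw [hk1, hk2, Submodule.restrictScalars_top, Submodule.restrictScalars_top,
    finrank_top, finrank_top, Module.finrank_pi_fintype, Module.finrank_pi_fintype]
  simp [Module.finrank_prod, Complex.finrank_real_complex]
end
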